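/- There exists a finite simple connected graph G with at least two vertices such that μ(G) > max over all pairs of adjacent vertices v_i ~ v_j of G of 2 + √((m_i − m_j)² + 4·d_i·d_j − 4·(m_i + m_j) + 4). (This disproves conjectured edge-maximum bound 68 of Brankov, Hansen and Stevanović.) -/

import Mathlib

noncomputable section

open Finset

/-- The degree of a vertex, as a real number. -/
def degR {V : Type*} [Fintype V] (G : SimpleGraph V) (v : V) : ℝ :=
  letI := Classical.decRel G.Adj
  (G.degree v : ℝ)

/-- The average degree of the neighbours of a vertex, as a real number:
`m_v = (∑_{u ~ v} d_u) / d_v`. -/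
def avgDegR {V : Type*} [Fintype V] (G : SimpleGraph V) (v : V) : ℝ :=
  letI := Classical.decRel G.Adj
  (∑ u ∈ G.neighborFinset v, (G.degree u : ℝ)) / (G.degree v : ℝ)

/-- The largest eigenvalue of the Laplacian matrix `L = D - A` of a finite graph. -/
def lapSpecRad {V : Type*} [Fintype V] [DecidableEq V] [Nonempty V]
    (G : SimpleGraph V) : ℝ :=
  letI := Classical.decRel G.Adj
  ⨆ i, (SimpleGraph.posSemidef_lapMatrix ℝ G).isHermitian.eigenvalues i

/-! ### Auxiliary material -/

open Matrix

lemma degR_eq' {V : Type*} [Fintype V] (G : SimpleGraph V) [inst : DecidableRel G.Adj] (v : V) :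
    degR G v = (G.degree v : ℝ) := by
  unfold degR
  rw [Subsingleton.elim (Classical.decRel G.Adj) inst]

lemma avgDegR_eq' {V : Type*} [Fintype V] (G : SimpleGraph V) [inst : DecidableRel G.Adj] (v : V) :
    avgDegR G v = ((∑ u ∈ G.neighborFinset v, G.degree u : ℕ) : ℝ) / (G.degree v : ℝ) := by
  unfold avgDegR
  rw [Subsingleton.elim (Classical.decRel G.Adj) inst, Nat.cast_sum]

/-- Rayleigh-quotient style upper bound for a real symmetric matrix. -/
lemma rayleigh_le {n : Type} [Fintype n] [DecidableEq n] [Nonempty n]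
    {A : Matrix n n ℝ} (hA : A.IsHermitian) (x : n → ℝ) :
    x ⬝ᵥ (A *ᵥ x) ≤ (⨆ i, hA.eigenvalues i) * (x ⬝ᵥ x) := by
  set U : Matrix n n ℝ := (hA.eigenvectorUnitary : Matrix n n ℝ) with hUdef
  have hU1 : U * star U = 1 := (Matrix.mem_unitaryGroup_iff).mp hA.eigenvectorUnitary.2
  have hstar : star U = Uᵀ := by
    rw [Matrix.star_eq_conjTranspose, Matrix.conjTranspose_eq_transpose_of_trivial]
  set y : n → ℝ := star U *ᵥ x with hy
  have hdot : ∀ w : n → ℝ, x ⬝ᵥ (U *ᵥ w) = y ⬝ᵥ w := by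
    intro w
    rw [Matrix.dotProduct_mulVec, hy, hstar, Matrix.mulVec_transpose]
  have hAx : x ⬝ᵥ (A *ᵥ x) = ∑ i, hA.eigenvalues i * (y i)^2 := by
    conv_lhs => rw [hA.spectral_theorem, Unitary.conjStarAlgAut_apply]
    rw [← Matrix.mulVec_mulVec, ← Matrix.mulVec_mulVec, hdot]
    simp only [dotProduct, Matrix.mulVec_diagonal, Function.comp_apply,
      RCLike.ofReal_real_eq_id, id_eq]
    exact Finset.sum_congr rfl fun i _ => by ring
  have hxx : x ⬝ᵥ x = ∑ i, (y i)^2 := by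
    have : y ⬝ᵥ y = x ⬝ᵥ x := by
      conv_lhs => rw [hy]
      rw [Matrix.dotProduct_mulVec, ← Matrix.mulVec_transpose, hstar,
        Matrix.transpose_transpose, Matrix.mulVec_mulVec, ← hstar, hU1, Matrix.one_mulVec]
    rw [← this, dotProduct]
    exact Finset.sum_congr rfl fun i _ => by ring
  rw [hAx, hxx, Finset.mul_sum]
  refine Finset.sum_le_sum fun i _ => ?_
  exact mul_le_mul_of_nonneg_right
    (le_ciSup (Set.Finite.bddAbove (Set.finite_range _)) i) (sq_nonneg _)

/-- The counterexample graph: a spider with 10 legs of length 2. -/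
def G21 : SimpleGraph (Fin 21) where
  Adj i j := (i.val = 0 ∧ 1 ≤ j.val ∧ j.val ≤ 10) ∨ (j.val = 0 ∧ 1 ≤ i.val ∧ i.val ≤ 10) ∨
    (j.val = i.val + 10 ∧ 1 ≤ i.val ∧ i.val ≤ 10) ∨ (i.val = j.val + 10 ∧ 1 ≤ j.val ∧ j.val ≤ 10)
  symm := ⟨by intro i j h; tauto⟩
  loopless := ⟨by intro i h; rcases h with ⟨h1,h2,_⟩|⟨h1,h2,_⟩|⟨h1,_⟩|⟨h1,_⟩ <;> omega⟩

instance G21.decAdj : DecidableRel G21.Adj := fun _ _ =>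
  inferInstanceAs (Decidable (_ ∨ _ ∨ _ ∨ _))

lemma G21_deg : ∀ v : Fin 21,
    G21.degree v = if v.val = 0 then 10 else if v.val ≤ 10 then 2 else 1 := by decide

lemma G21_degsum : ∀ v : Fin 21,
    (∑ u ∈ G21.neighborFinset v, G21.degree u)
      = if v.val = 0 then 20 else if v.val ≤ 10 then 11 else 2 := by decide

lemma degR_c (v : Fin 21) (h : v.val = 0) : degR G21 v = 10 := by
  rw [degR_eq', G21_deg v, if_pos h]; norm_num

lemma degR_m (v : Fin 21) (h1 : 1 ≤ v.val) (h2 : v.val ≤ 10) : degR G21 v = 2 := by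
  rw [degR_eq', G21_deg v, if_neg (by omega), if_pos h2]; norm_num

lemma degR_l (v : Fin 21) (h : 11 ≤ v.val) : degR G21 v = 1 := by
  rw [degR_eq', G21_deg v, if_neg (by omega), if_neg (by omega)]; norm_num

lemma avg_c (v : Fin 21) (h : v.val = 0) : avgDegR G21 v = 2 := by
  rw [avgDegR_eq', G21_degsum v, if_pos h, G21_deg v, if_pos h]; norm_num

lemma avg_m (v : Fin 21) (h1 : 1 ≤ v.val) (h2 : v.val ≤ 10) : avgDegR G21 v = 11/2 := by
  rw [avgDegR_eq', G21_degsum v, if_neg (by omega), if_pos h2,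
    G21_deg v, if_neg (by omega), if_pos h2]; norm_num

lemma avg_l (v : Fin 21) (h : 11 ≤ v.val) : avgDegR G21 v = 2 := by
  rw [avgDegR_eq', G21_degsum v, if_neg (by omega), if_neg (by omega),
    G21_deg v, if_neg (by omega), if_neg (by omega)]; norm_num

lemma G21_conn : G21.Connected := by
  rw [SimpleGraph.connected_iff]
  refine ⟨?_, ⟨0⟩⟩
  have h0 : ∀ v : Fin 21, G21.Reachable 0 v := by
    intro v
    fin_cases v
    · exact SimpleGraph.Reachable.refl _
    · exact (by decide : G21.Adj 0 1).reachable
    · exact (by decide : G21.Adj 0 2).reachable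
    · exact (by decide : G21.Adj 0 3).reachable
    · exact (by decide : G21.Adj 0 4).reachable
    · exact (by decide : G21.Adj 0 5).reachable
    · exact (by decide : G21.Adj 0 6).reachable
    · exact (by decide : G21.Adj 0 7).reachable
    · exact (by decide : G21.Adj 0 8).reachable
    · exact (by decide : G21.Adj 0 9).reachable
    · exact (by decide : G21.Adj 0 10).reachable
    · exact ((by decide : G21.Adj 0 1).reachable.trans (by decide : G21.Adj 1 11).reachable)
    · exact ((by decide : G21.Adj 0 2).reachable.trans (by decide : G21.Adj 2 12).reachable)
    · exact ((by decide : G21.Adj 0 3).reachable.trans (by decide : G21.Adj 3 13).reachable)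
    · exact ((by decide : G21.Adj 0 4).reachable.trans (by decide : G21.Adj 4 14).reachable)
    · exact ((by decide : G21.Adj 0 5).reachable.trans (by decide : G21.Adj 5 15).reachable)
    · exact ((by decide : G21.Adj 0 6).reachable.trans (by decide : G21.Adj 6 16).reachable)
    · exact ((by decide : G21.Adj 0 7).reachable.trans (by decide : G21.Adj 7 17).reachable)
    · exact ((by decide : G21.Adj 0 8).reachable.trans (by decide : G21.Adj 8 18).reachable)
    · exact ((by decide : G21.Adj 0 9).reachable.trans (by decide : G21.Adj 9 19).reachable)
    · exact ((by decide : G21.Adj 0 10).reachable.trans (by decide : G21.Adj 10 20).reachable)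
  intro u v
  exact (h0 u).symm.trans (h0 v)

/-- The test vector for the Rayleigh quotient. -/
def xv : Fin 21 → ℝ := fun v => if v.val = 0 then (10:ℝ) else if v.val ≤ 10 then -1 else 0

lemma est (e : ℝ) (he : e < (100/11)^2) : 2 + Real.sqrt e < 122/11 := by
  have h := (Real.sqrt_lt' (x := e) (y := 100/11) (by norm_num)).mpr he
  linarith

set_option maxHeartbeats 2000000 in
lemma G21_quad :
    (∑ i : Fin 21, ∑ j : Fin 21, if G21.Adj i j then (xv i - xv j)^2 else 0) = 2440 := by
  simp only [Fin.sum_univ_succ, Fin.sum_univ_zero, xv, G21]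
  norm_num [Fin.succ]

set_option maxHeartbeats 1000000 in
lemma G21_xx : xv ⬝ᵥ xv = 110 := by
  simp only [dotProduct, Fin.sum_univ_succ, Fin.sum_univ_zero, xv]
  norm_num [Fin.succ]

lemma eigen_congr {n : Type} [Fintype n] [DecidableEq n] {A B : Matrix n n ℝ} (h : A = B)
    (hA : A.IsHermitian) (hB : B.IsHermitian) :
    (⨆ i, hA.eigenvalues i) = ⨆ i, hB.eigenvalues i := by subst h; rfl

lemma lsr_ge : (122/11 : ℝ) ≤ lapSpecRad G21 := by
  have hH : (G21.lapMatrix ℝ).IsHermitian :=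
    (SimpleGraph.posSemidef_lapMatrix ℝ G21).isHermitian
  have hray := rayleigh_le hH xv
  have hquad : xv ⬝ᵥ ((G21.lapMatrix ℝ) *ᵥ xv) = 1220 := by
    rw [← Matrix.toLinearMap₂'_apply', SimpleGraph.lapMatrix_toLinearMap₂', G21_quad]
    norm_num
  have hM : (letI := Classical.decRel G21.Adj; G21.lapMatrix ℝ) = G21.lapMatrix ℝ := by
    rw [Subsingleton.elim (Classical.decRel G21.Adj) G21.decAdj]
  have hkey : (122/11 : ℝ) ≤ ⨆ i, hH.eigenvalues i := by
    rw [hquad, G21_xx] at hray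
    linarith
  unfold lapSpecRad
  exact hkey.trans (le_of_eq (eigen_congr hM.symm hH (hM ▸ hH)))

/-- There exists a finite simple connected graph `G` with at least two vertices whose
Laplacian spectral radius exceeds the conjectured edge-maximum bound. -/
theorem exists_counterexample_bound68 :
    ∃ (V : Type) (_ : Fintype V) (_ : DecidableEq V) (_ : Nonempty V)
      (G : SimpleGraph V), G.Connected ∧ 2 ≤ Fintype.card V ∧
      ∀ i j : V, G.Adj i j →
        (fun di mi dj mj => 2 + Real.sqrt ((mi - mj) ^ 2 + 4 * di * dj - 4 * (mi + mj) + 4))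
          (degR G i) (avgDegR G i) (degR G j) (avgDegR G j) < lapSpecRad G := by
  refine ⟨Fin 21, inferInstance, inferInstance, inferInstance, G21, G21_conn, by norm_num, ?_⟩
  intro i j hadj
  have hadj' : (i.val = 0 ∧ 1 ≤ j.val ∧ j.val ≤ 10) ∨ (j.val = 0 ∧ 1 ≤ i.val ∧ i.val ≤ 10) ∨
      (j.val = i.val + 10 ∧ 1 ≤ i.val ∧ i.val ≤ 10) ∨
      (i.val = j.val + 10 ∧ 1 ≤ j.val ∧ j.val ≤ 10) := hadj
  refine lt_of_lt_of_le ?_ lsr_ge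
  show 2 + Real.sqrt ((avgDegR G21 i - avgDegR G21 j) ^ 2 + 4 * degR G21 i * degR G21 j
      - 4 * (avgDegR G21 i + avgDegR G21 j) + 4) < 122/11
  rcases hadj' with ⟨h1,h2,h3⟩|⟨h1,h2,h3⟩|⟨h1,h2,h3⟩|⟨h1,h2,h3⟩
  · rw [degR_c i h1, avg_c i h1, degR_m j h2 h3, avg_m j h2 h3]
    exact est _ (by norm_num)
  · rw [degR_c j h1, avg_c j h1, degR_m i h2 h3, avg_m i h2 h3]
    exact est _ (by norm_num)
  · rw [degR_m i h2 h3, avg_m i h2 h3, degR_l j (by omega), avg_l j (by omega)]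
    exact est _ (by norm_num)
  · rw [degR_m j h2 h3, avg_m j h2 h3, degR_l i (by omega), avg_l i (by omega)]
    exact est _ (by norm_num)
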